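/- For the width-symmetric model with J_k = 2^{kσ} J and J ≠ 0, the series ∑_{k≥1} 2^{-k} ln[cosh(βJ_k) + P_{k-1}^2 sinh(βJ_k)] converges (so the thermodynamic limit of the free energy density exists) if σ < 1, and diverges if σ ≥ 1. -/

import Mathlib

open Real BigOperators Finset

noncomputable section

/-- Map a Boolean spin to ±1. -/
def spin (b : Bool) : ℝ := if b then 1 else -1

/-- Embed index of left half. -/
def finLeft {k : ℕ} (i : Fin (2^k)) : Fin (2^(k+1)) :=
  ⟨i.val, lt_of_lt_of_le i.isLt (Nat.pow_le_pow_right (by norm_num) (Nat.le_succ k))⟩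

/-- Embed index of right half. -/
def finRight {k : ℕ} (i : Fin (2^k)) : Fin (2^(k+1)) :=
  ⟨2^k + i.val, by
    have h := i.isLt
    have h2 : 2^(k+1) = 2^k + 2^k := by rw [pow_succ]; ring
    omega⟩

/-- Parity (product of ±1 spins) of a configuration. -/
def parityProd {m : ℕ} (s : Fin m → Bool) : ℝ := ∏ i, spin (s i)

/-- Hamiltonian of sub-system (k,p) of the hierarchical parity model,
as a function of its own 2^k spins. -/
def Hsub (J : ℕ → ℕ → ℝ) : (k : ℕ) → ℕ → (Fin (2^k) → Bool) → ℝ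
  | 0, p, s => -(J 0 p) * spin (s ⟨0, Nat.two_pow_pos 0⟩)
  | (k+1), p, s =>
      Hsub J k (2*p-1) (fun i => s (finLeft i)) +
      Hsub J k (2*p) (fun i => s (finRight i)) -
      J (k+1) p * parityProd s

/-- Partition function of sub-system (k,p). -/
def Z (J : ℕ → ℕ → ℝ) (β : ℝ) (k p : ℕ) : ℝ :=
  ∑ s : Fin (2^k) → Bool, Real.exp (-β * Hsub J k p s)

/-- Thermal expectation of the parity of sub-system (k,p). -/
def Pexp (J : ℕ → ℕ → ℝ) (β : ℝ) (k p : ℕ) : ℝ :=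
  (∑ s : Fin (2^k) → Bool, parityProd s * Real.exp (-β * Hsub J k p s)) / Z J β k p

/-- Height-dependent couplings J_k = 2^{kσ} J. -/
noncomputable def Jcoup (σ J : ℝ) (k : ℕ) : ℝ := (2:ℝ)^((k:ℝ)*σ) * J

/-- The width-symmetric parity recursion P_k, with P_0 = tanh(βJ). -/
noncomputable def Pseq (β σ J : ℝ) : ℕ → ℝ
  | 0 => Real.tanh (β * J)
  | (k+1) =>
      (Real.sinh (β * Jcoup σ J (k+1)) +
          (Pseq β σ J k)^2 * Real.cosh (β * Jcoup σ J (k+1))) /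
      (Real.cosh (β * Jcoup σ J (k+1)) +
          (Pseq β σ J k)^2 * Real.sinh (β * Jcoup σ J (k+1)))

lemma auxD_pos (x P : ℝ) (hP : P^2 < 1) :
    0 < Real.cosh x + P^2 * Real.sinh x := by
  nlinarith [Real.cosh_pos x, Real.cosh_add_sinh x, Real.exp_pos x, sq_nonneg P]

lemma auxD_le (x P : ℝ) (hP : P^2 ≤ 1) :
    Real.cosh x + P^2 * Real.sinh x ≤ Real.exp |x| := by
  rcases le_or_gt 0 x with hx | hx
  · rw [abs_of_nonneg hx]
    have hs : 0 ≤ Real.sinh x := Real.sinh_nonneg_iff.mpr hx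
    nlinarith [Real.cosh_add_sinh x, sq_nonneg P]
  · rw [abs_of_neg hx]
    have hs : Real.sinh x ≤ 0 := Real.sinh_nonpos_iff.mpr hx.le
    have h2 : Real.cosh (-x) + Real.sinh (-x) = Real.exp (-x) := Real.cosh_add_sinh _
    rw [Real.cosh_neg, Real.sinh_neg] at h2
    nlinarith [sq_nonneg P]

lemma auxcosh_ge (x : ℝ) : Real.exp |x| / 2 ≤ Real.cosh x := by
  rw [← Real.cosh_abs, Real.cosh_eq]
  have := Real.exp_pos (-|x|)
  linarith

lemma auxD_ge (x P : ℝ) (hP : P^2 ≤ 1) :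
    Real.exp (-|x|) ≤ Real.cosh x + P^2 * Real.sinh x := by
  have h1 : 1 ≤ Real.cosh x := Real.one_le_cosh x
  have h2 : Real.exp (-|x|) ≤ 1 := Real.exp_le_one_iff.mpr (neg_nonpos.mpr (abs_nonneg x))
  have h3 : Real.exp (-|x|) ≤ Real.exp x := Real.exp_le_exp.mpr (neg_abs_le x)
  have h4 : Real.cosh x + Real.sinh x = Real.exp x := Real.cosh_add_sinh x
  nlinarith [sq_nonneg P]

lemma auxD_ge' (x P : ℝ) :
    Real.cosh x * (1 - P^2) ≤ Real.cosh x + P^2 * Real.sinh x := by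
  have h4 : Real.cosh x + Real.sinh x = Real.exp x := Real.cosh_add_sinh x
  nlinarith [sq_nonneg P, Real.exp_pos x]

lemma aux_identity (x P : ℝ) (hP : P^2 < 1) :
    1 - ((Real.sinh x + P^2 * Real.cosh x) / (Real.cosh x + P^2 * Real.sinh x))^2
      = (1 - P^2) * (1 + P^2) / (Real.cosh x + P^2 * Real.sinh x)^2 := by
  have hD := auxD_pos x P hP
  have h1 : Real.cosh x ^ 2 - Real.sinh x ^ 2 = 1 := Real.cosh_sq_sub_sinh_sq x
  rw [div_pow, eq_div_iff (pow_pos hD 2).ne', sub_mul, div_mul_cancel₀ _ (pow_pos hD 2).ne']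
  linear_combination (1 - P^4) * h1

lemma tanh_sq_lt_one (y : ℝ) : (Real.tanh y)^2 < 1 := by
  rw [Real.tanh_eq_sinh_div_cosh, div_pow, div_lt_one (by positivity)]
  nlinarith [Real.cosh_sq_sub_sinh_sq y]

lemma Pseq_sq_lt_one (β σ J : ℝ) : ∀ k, (Pseq β σ J k)^2 < 1 := by
  intro k
  induction k with
  | zero => exact _root_.tanh_sq_lt_one (β * J)
  | succ k ih =>
      have h := aux_identity (β * Jcoup σ J (k+1)) (Pseq β σ J k) ih
      have h2 : Pseq β σ J (k+1) =
          (Real.sinh (β * Jcoup σ J (k+1)) + (Pseq β σ J k)^2 * Real.cosh (β * Jcoup σ J (k+1))) /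
          (Real.cosh (β * Jcoup σ J (k+1)) + (Pseq β σ J k)^2 * Real.sinh (β * Jcoup σ J (k+1))) := rfl
      rw [h2]
      have hD := auxD_pos (β * Jcoup σ J (k+1)) (Pseq β σ J k) ih
      have hpos : 0 < (1 - (Pseq β σ J k)^2) * (1 + (Pseq β σ J k)^2) /
          (Real.cosh (β * Jcoup σ J (k+1)) + (Pseq β σ J k)^2 * Real.sinh (β * Jcoup σ J (k+1)))^2 :=
        div_pos (by nlinarith) (by positivity)
      linarith [h, hpos]

/-- The key exact identity: `1 - P_{k+1}² = (1-P_k²)(1+P_k²)/D_k²`. -/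
lemma one_sub_Pseq_sq (β σ J : ℝ) (k : ℕ) :
    1 - (Pseq β σ J (k+1))^2
      = (1 - (Pseq β σ J k)^2) * (1 + (Pseq β σ J k)^2) /
        (Real.cosh (β * Jcoup σ J (k+1)) + (Pseq β σ J k)^2 * Real.sinh (β * Jcoup σ J (k+1)))^2 :=
  aux_identity _ _ (Pseq_sq_lt_one β σ J k)

lemma one_sub_Pseq_sq_pos (β σ J : ℝ) (k : ℕ) : 0 < 1 - (Pseq β σ J k)^2 := by
  have := Pseq_sq_lt_one β σ J k; linarith

/-- `log D_k = (log(1-P_k²) + log(1+P_k²) - log(1-P_{k+1}²))/2`. -/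
lemma logD_eq (β σ J : ℝ) (k : ℕ) :
    Real.log (Real.cosh (β * Jcoup σ J (k+1)) +
        (Pseq β σ J k)^2 * Real.sinh (β * Jcoup σ J (k+1)))
      = (Real.log (1 - (Pseq β σ J k)^2) + Real.log (1 + (Pseq β σ J k)^2)
          - Real.log (1 - (Pseq β σ J (k+1))^2)) / 2 := by
  have hq := one_sub_Pseq_sq_pos β σ J k
  have hq1 : (0:ℝ) < 1 + (Pseq β σ J k)^2 := by positivity
  have hD := auxD_pos (β * Jcoup σ J (k+1)) (Pseq β σ J k) (Pseq_sq_lt_one β σ J k)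
  have h := one_sub_Pseq_sq β σ J k
  have h2 : Real.log (1 - (Pseq β σ J (k+1))^2)
      = Real.log (1 - (Pseq β σ J k)^2) + Real.log (1 + (Pseq β σ J k)^2)
        - 2 * Real.log (Real.cosh (β * Jcoup σ J (k+1)) +
            (Pseq β σ J k)^2 * Real.sinh (β * Jcoup σ J (k+1))) := by
    rw [h, Real.log_div (by positivity) (by positivity), Real.log_mul hq.ne' hq1.ne',
      Real.log_pow]
    push_cast; ring
  linarith

/-- The one-step lower bound `u_{k+1} ≥ 2|x_{k+1}| - log 8 - u_k`. -/
lemma u_step (β σ J : ℝ) (k : ℕ) :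
    2 * |β * Jcoup σ J (k+1)| - Real.log 8 + Real.log (1 - (Pseq β σ J k)^2)
      ≤ -Real.log (1 - (Pseq β σ J (k+1))^2) := by
  set x := β * Jcoup σ J (k+1) with hxdef
  set P := Pseq β σ J k with hPdef
  have hP := Pseq_sq_lt_one β σ J k
  rw [← hPdef] at hP
  set D := Real.cosh x + P^2 * Real.sinh x with hDdef
  have hD : 0 < D := auxD_pos x P hP
  have hq : (0:ℝ) < 1 - P^2 := by linarith
  set E := Real.exp |x| with hEdef
  have hE : 0 < E := Real.exp_pos _
  have hcd : E * (1 - P^2) / 2 ≤ D := by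
    have h1 := auxcosh_ge x
    have h2 := auxD_ge' x P
    nlinarith
  have hsq : (E * (1 - P^2) / 2)^2 ≤ D^2 := by
    have h0 : (0:ℝ) ≤ E * (1 - P^2) / 2 := by positivity
    nlinarith
  have h2 : (1 - P^2) * (1 + P^2) / D^2 ≤ 8 / (E^2 * (1 - P^2)) := by
    rw [div_le_div_iff₀ (by positivity) (by positivity)]
    nlinarith [sq_nonneg P, sq_nonneg (E * (1 - P^2))]
  have h1 : 1 - (Pseq β σ J (k+1))^2 = (1 - P^2) * (1 + P^2) / D^2 := one_sub_Pseq_sq β σ J k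
  have hpos1 : (0:ℝ) < (1 - P^2) * (1 + P^2) / D^2 := div_pos (by nlinarith) (by positivity)
  have h3 : Real.log (1 - (Pseq β σ J (k+1))^2) ≤ Real.log (8 / (E^2 * (1 - P^2))) := by
    rw [h1]
    exact (Real.log_le_log_iff hpos1 (by positivity)).mpr h2
  have h4 : Real.log (8 / (E^2 * (1 - P^2)))
      = Real.log 8 - (2 * |x| + Real.log (1 - P^2)) := by
    rw [Real.log_div (by norm_num) (by positivity), Real.log_mul (by positivity) hq.ne',
      Real.log_pow, hEdef, Real.log_exp]
    push_cast; ring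
  rw [h4] at h3
  linarith

lemma abs_x_eq (β σ J : ℝ) (hβ : 0 < β) (k : ℕ) :
    |β * Jcoup σ J k| = β * (2:ℝ)^((k:ℝ)*σ) * |J| := by
  unfold Jcoup
  rw [← mul_assoc, abs_mul, abs_mul, abs_of_pos hβ,
    abs_of_pos (Real.rpow_pos_of_pos two_pos _)]

noncomputable def useq (β σ J : ℝ) (k : ℕ) : ℝ := -Real.log (1 - (Pseq β σ J k)^2)
noncomputable def tseq (β σ J : ℝ) (k : ℕ) : ℝ := ((2:ℝ)^(k+2))⁻¹ * useq β σ J k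
noncomputable def wseq (β σ J : ℝ) (k : ℕ) : ℝ := ((2:ℝ)^(k+3))⁻¹ * useq β σ J (k+1)
noncomputable def vseq (β σ J : ℝ) (k : ℕ) : ℝ :=
  ((2:ℝ)^(k+2))⁻¹ * Real.log (1 + (Pseq β σ J k)^2)

lemma useq_nonneg (β σ J : ℝ) (k : ℕ) : 0 ≤ useq β σ J k := by
  have h1 := one_sub_Pseq_sq_pos β σ J k
  have h2 : 1 - (Pseq β σ J k)^2 ≤ 1 := by nlinarith [sq_nonneg (Pseq β σ J k)]
  unfold useq
  simpa using neg_nonneg.mpr (Real.log_nonpos h1.le h2)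

lemma tseq_nonneg (β σ J : ℝ) (k : ℕ) : 0 ≤ tseq β σ J k :=
  mul_nonneg (by positivity) (useq_nonneg β σ J k)

lemma wseq_nonneg (β σ J : ℝ) (k : ℕ) : 0 ≤ wseq β σ J k :=
  mul_nonneg (by positivity) (useq_nonneg β σ J (k+1))

lemma vseq_nonneg (β σ J : ℝ) (k : ℕ) : 0 ≤ vseq β σ J k :=
  mul_nonneg (by positivity) (Real.log_nonneg (by nlinarith [sq_nonneg (Pseq β σ J k)]))

lemma a_decomp (β σ J : ℝ) (k : ℕ) :
    ((2:ℝ)^(k+1))⁻¹ * Real.log (Real.cosh (β * Jcoup σ J (k+1)) +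
        (Pseq β σ J k)^2 * Real.sinh (β * Jcoup σ J (k+1)))
      = vseq β σ J k + (tseq β σ J (k+1) - tseq β σ J k) + wseq β σ J k := by
  rw [logD_eq]
  unfold vseq tseq wseq useq
  have h1 : ((2:ℝ)^(k+1)) ≠ 0 := by positivity
  field_simp
  ring

/-- the free-energy series converges iff σ < 1. -/
theorem free_energy_series_convergence (β σ J : ℝ) (hβ : 0 < β) (hJ : J ≠ 0) :
    (σ < 1 → Summable (fun k : ℕ => ((2:ℝ)^(k+1))⁻¹ *
      Real.log (Real.cosh (β * Jcoup σ J (k+1)) +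
        (Pseq β σ J k)^2 * Real.sinh (β * Jcoup σ J (k+1))))) ∧
    (1 ≤ σ → ¬ Summable (fun k : ℕ => ((2:ℝ)^(k+1))⁻¹ *
      Real.log (Real.cosh (β * Jcoup σ J (k+1)) +
        (Pseq β σ J k)^2 * Real.sinh (β * Jcoup σ J (k+1))))) := by
  have hJ' : 0 < |J| := abs_pos.mpr hJ
  constructor
  · -- convergence for σ < 1
    intro hσ
    set r : ℝ := (2:ℝ)^(σ-1) with hrdef
    have hr0 : 0 ≤ r := (Real.rpow_pos_of_pos two_pos _).le
    have hr1 : r < 1 := Real.rpow_lt_one_of_one_lt_of_neg one_lt_two (by linarith)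
    apply Summable.of_norm_bounded (g := fun k => (β * |J| * r) * r^k)
      ((summable_geometric_of_lt_one hr0 hr1).mul_left _)
    intro k
    have hP := Pseq_sq_lt_one β σ J k
    have hD := auxD_pos (β * Jcoup σ J (k+1)) (Pseq β σ J k) hP
    have hub := auxD_le (β * Jcoup σ J (k+1)) (Pseq β σ J k) hP.le
    have hlb := auxD_ge (β * Jcoup σ J (k+1)) (Pseq β σ J k) hP.le
    have hlog : |Real.log (Real.cosh (β * Jcoup σ J (k+1)) +
        (Pseq β σ J k)^2 * Real.sinh (β * Jcoup σ J (k+1)))| ≤ |β * Jcoup σ J (k+1)| :=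
      abs_le.mpr ⟨(Real.le_log_iff_exp_le hD).mpr hlb, (Real.log_le_iff_le_exp hD).mpr hub⟩
    have hkey : ((2:ℝ)^(k+1))⁻¹ * (2:ℝ)^((((k+1):ℕ):ℝ)*σ) = r^(k+1) := by
      have e1 : ((2:ℝ)^(k+1))⁻¹ = (2:ℝ)^(-(((k+1):ℕ):ℝ)) := by
        rw [Real.rpow_neg (by norm_num), Real.rpow_natCast]
      have e2 : r^(k+1) = (2:ℝ)^((σ-1)*(((k+1):ℕ):ℝ)) := by
        rw [hrdef, Real.rpow_mul (by norm_num), Real.rpow_natCast]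
      rw [e1, e2, ← Real.rpow_add (by norm_num)]
      congr 1
      push_cast
      ring
    rw [Real.norm_eq_abs, abs_mul, abs_inv, abs_pow, abs_two]
    calc ((2:ℝ)^(k+1))⁻¹ * |Real.log (Real.cosh (β * Jcoup σ J (k+1)) +
            (Pseq β σ J k)^2 * Real.sinh (β * Jcoup σ J (k+1)))|
        ≤ ((2:ℝ)^(k+1))⁻¹ * |β * Jcoup σ J (k+1)| := by
          apply mul_le_mul_of_nonneg_left hlog (by positivity)
      _ = ((2:ℝ)^(k+1))⁻¹ * (β * (2:ℝ)^((((k+1):ℕ):ℝ)*σ) * |J|) := by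
          rw [abs_x_eq β σ J hβ (k+1)]
      _ = (β * |J| * r) * r^k := by
          have : ((2:ℝ)^(k+1))⁻¹ * (β * (2:ℝ)^((((k+1):ℕ):ℝ)*σ) * |J|)
              = (β * |J|) * (((2:ℝ)^(k+1))⁻¹ * (2:ℝ)^((((k+1):ℕ):ℝ)*σ)) := by ring
          rw [this, hkey, pow_succ]
          ring
  · -- divergence for σ ≥ 1
    intro hσ hsum
    -- partial sums of the nonnegative sequence `wseq` are bounded
    have hbdd : BddAbove (Set.range (fun N => ∑ k ∈ Finset.range N,
        ((2:ℝ)^(k+1))⁻¹ * Real.log (Real.cosh (β * Jcoup σ J (k+1)) +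
          (Pseq β σ J k)^2 * Real.sinh (β * Jcoup σ J (k+1))))) :=
      hsum.hasSum.tendsto_sum_nat.isBoundedUnder_le.bddAbove_range
    obtain ⟨C, hC⟩ := hbdd
    have hps : ∀ N, ∑ k ∈ Finset.range N, wseq β σ J k
        = (∑ k ∈ Finset.range N, ((2:ℝ)^(k+1))⁻¹ *
            Real.log (Real.cosh (β * Jcoup σ J (k+1)) +
              (Pseq β σ J k)^2 * Real.sinh (β * Jcoup σ J (k+1))))
          - (∑ k ∈ Finset.range N, vseq β σ J k) - (tseq β σ J N - tseq β σ J 0) := by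
      intro N
      have h1 : ∀ k ∈ Finset.range N, wseq β σ J k
          = (((2:ℝ)^(k+1))⁻¹ * Real.log (Real.cosh (β * Jcoup σ J (k+1)) +
              (Pseq β σ J k)^2 * Real.sinh (β * Jcoup σ J (k+1)))
            - vseq β σ J k) - (tseq β σ J (k+1) - tseq β σ J k) := by
        intro k _
        rw [a_decomp β σ J k]
        ring
      rw [Finset.sum_congr rfl h1, Finset.sum_sub_distrib, Finset.sum_sub_distrib,
        Finset.sum_range_sub (tseq β σ J)]
    have hwle : ∀ N, ∑ k ∈ Finset.range N, wseq β σ J k ≤ C + tseq β σ J 0 := by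
      intro N
      rw [hps N]
      have h1 : (∑ k ∈ Finset.range N, ((2:ℝ)^(k+1))⁻¹ *
          Real.log (Real.cosh (β * Jcoup σ J (k+1)) +
            (Pseq β σ J k)^2 * Real.sinh (β * Jcoup σ J (k+1)))) ≤ C :=
        hC (Set.mem_range_self N)
      have h2 : 0 ≤ ∑ k ∈ Finset.range N, vseq β σ J k :=
        Finset.sum_nonneg (fun k _ => vseq_nonneg β σ J k)
      have h3 := tseq_nonneg β σ J N
      linarith
    have hw : Summable (wseq β σ J) :=
      summable_of_sum_range_le (fun k => wseq_nonneg β σ J k) hwle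
    have hgeo : Summable (fun k : ℕ => ((2:ℝ)^(k+4))⁻¹ * Real.log 8) := by
      apply Summable.congr (((summable_geometric_of_lt_one (by norm_num : (0:ℝ) ≤ 2⁻¹)
        (by norm_num)).mul_right (16⁻¹ * Real.log 8)))
      intro k
      rw [inv_pow]
      have h1 : ((2:ℝ)^(k+4)) = (2:ℝ)^k * 16 := by ring
      rw [h1, mul_inv]
      ring
    set w' : ℕ → ℝ := fun k => wseq β σ J k + ((2:ℝ)^(k+4))⁻¹ * Real.log 8 with hw'def
    have hw' : Summable w' := hw.add hgeo
    have hz : Filter.Tendsto (fun k => w' k + w' (k+1)) Filter.atTop (nhds 0) := by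
      have h0 := hw'.tendsto_atTop_zero
      have h1 : Filter.Tendsto (fun k => w' (k+1)) Filter.atTop (nhds 0) :=
        h0.comp (Filter.tendsto_add_atTop_nat 1)
      simpa using h0.add h1
    have hlb : ∀ k, β * |J| / 2 ≤ w' k + w' (k+1) := by
      intro k
      have h24 : (0:ℝ) < ((2:ℝ)^(k+4))⁻¹ := by positivity
      have key : 2 * |β * Jcoup σ J (k+2)| - Real.log 8
          ≤ useq β σ J (k+1) + useq β σ J (k+2) := by
        have hs := u_step β σ J (k+1)
        unfold useq
        linarith
      have hrp : (2:ℝ)^((((k+2):ℕ)):ℝ) ≤ (2:ℝ)^(((((k+2):ℕ)):ℝ)*σ) := by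
        apply Real.rpow_le_rpow_of_exponent_le one_le_two
        nlinarith [Nat.cast_nonneg (α := ℝ) (k+2)]
      have hrc : (2:ℝ)^((((k+2):ℕ)):ℝ) = (2:ℝ)^(k+2) := Real.rpow_natCast 2 (k+2)
      have habs : β * (2:ℝ)^(k+2) * |J| ≤ |β * Jcoup σ J (k+2)| := by
        rw [abs_x_eq β σ J hβ (k+2)]
        have h2 : (2:ℝ)^(k+2) ≤ (2:ℝ)^(((((k+2):ℕ)):ℝ)*σ) := by rw [← hrc]; exact hrp
        exact mul_le_mul_of_nonneg_right (mul_le_mul_of_nonneg_left h2 hβ.le) (abs_nonneg J)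
      have hbig : 2 * (β * (2:ℝ)^(k+2) * |J|)
          ≤ useq β σ J (k+1) + useq β σ J (k+2) + Real.log 8 := by linarith
      have hmul := mul_le_mul_of_nonneg_left hbig h24.le
      have e : ((2:ℝ)^(k+4))⁻¹ * (2 * (β * (2:ℝ)^(k+2) * |J|)) = β * |J| / 2 := by
        have h1 : ((2:ℝ)^(k+4)) = (2:ℝ)^(k+2) * 4 := by ring
        rw [h1]
        field_simp
        ring
      have hw1 : ((2:ℝ)^(k+4))⁻¹ * useq β σ J (k+1) ≤ wseq β σ J k := by
        unfold wseq
        apply mul_le_mul_of_nonneg_right _ (useq_nonneg β σ J (k+1))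
        apply inv_anti₀ (by positivity)
        apply pow_le_pow_right₀ (by norm_num)
        omega
      have hw2 : wseq β σ J (k+1) = ((2:ℝ)^(k+4))⁻¹ * useq β σ J (k+2) := rfl
      have hlog8 : 0 ≤ ((2:ℝ)^(k+1+4))⁻¹ * Real.log 8 :=
        mul_nonneg (by positivity) (Real.log_nonneg (by norm_num))
      have hexp : w' k + w' (k+1) = wseq β σ J k + ((2:ℝ)^(k+4))⁻¹ * Real.log 8
          + wseq β σ J (k+1) + ((2:ℝ)^(k+1+4))⁻¹ * Real.log 8 := by
        rw [hw'def]
        ring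
      rw [hexp, hw2]
      rw [mul_add, mul_add] at hmul
      linarith
    have hfin : β * |J| / 2 ≤ 0 := ge_of_tendsto' hz hlb
    nlinarith
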